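/- Let f : X ⟶ Y be a morphism of schemes that is integral and surjective. Then the topological Krull dimension of the underlying topological space of X equals the topological Krull dimension of the underlying topological space of Y. -/

import Mathlib

open AlgebraicGeometry TopologicalSpace CategoryTheory

lemma aux_affine {W T : Scheme} (g : W ⟶ T) [IsIntegralHom g] [IsAffine T] :
    SpecializingMap g.base ∧ ∀ ⦃x x' : W⦄, x ⤳ x' → g.base x = g.base x' → x = x' := by
  obtain ⟨hW, hint⟩ := (IsIntegralHom.hasAffineProperty.iff_of_isAffine (P := @IsIntegralHom) (f := g)).mp
    ‹IsIntegralHom g›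
  have : IsAffine W := hW
  have hg : g = W.isoSpec.hom ≫ Spec.map g.appTop ≫ T.isoSpec.inv := by
    rw [Scheme.isoSpec_inv_naturality, Iso.hom_inv_id_assoc]
  have hSpec : ∀ ⦃p q : PrimeSpectrum Γ(W, ⊤)⦄, p ⤳ q →
      (Spec.map g.appTop).base p = (Spec.map g.appTop).base q → p = q := by
    intro p q hpq he
    change PrimeSpectrum.comap g.appTop.hom p = PrimeSpectrum.comap g.appTop.hom q at he
    by_contra hne
    have hle : p.asIdeal ≤ q.asIdeal := (PrimeSpectrum.le_iff_specializes _ _).mpr hpq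
    have hlt : p.asIdeal < q.asIdeal := lt_of_le_of_ne hle (fun h => hne (PrimeSpectrum.ext h))
    obtain ⟨s, hsq, hsp⟩ := Set.exists_of_ssubset hlt
    letI alg := (g.appTop.hom : Γ(T, ⊤) →+* Γ(W, ⊤)).toAlgebra
    have := Ideal.comap_lt_comap_of_integral_mem_sdiff (I := p.asIdeal) (J := q.asIdeal)
      hle ⟨hsq, hsp⟩ (hint s)
    exact absurd (congrArg PrimeSpectrum.asIdeal he) this.ne
  have h1 : SpecializingMap (Spec.map g.appTop).base := by
    rw [Spec.map_base]
    exact (PrimeSpectrum.isClosedMap_comap_of_isIntegral _ hint).specializingMap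
  have h2 : SpecializingMap (W.isoSpec.hom).base :=
    (Scheme.homeoOfIso W.isoSpec).isClosedMap.specializingMap
  have h3 : SpecializingMap (T.isoSpec.inv).base :=
    (Scheme.homeoOfIso T.isoSpec.symm).isClosedMap.specializingMap
  constructor
  · rw [hg]
    simp only [Scheme.Hom.comp_base, TopCat.coe_comp]
    exact (h2.comp h1).comp h3
  · intro x x' hxx' he
    rw [hg] at he
    simp only [Scheme.Hom.comp_base, TopCat.coe_comp, Function.comp_apply] at he
    have he' : (Spec.map g.appTop).base (W.isoSpec.hom.base x)
        = (Spec.map g.appTop).base (W.isoSpec.hom.base x') :=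
      (Scheme.homeoOfIso T.isoSpec.symm).injective he
    have hs : (W.isoSpec.hom.base x) ⤳ (W.isoSpec.hom.base x') :=
      hxx'.map W.isoSpec.hom.base.hom.2
    exact (Scheme.homeoOfIso W.isoSpec).injective (hSpec hs he')

lemma aux_spec {X Y : Scheme} (f : X ⟶ Y) [IsIntegralHom f] : SpecializingMap f.base := by
  have : (topologically @SpecializingMap) f := by
    apply IsZariskiLocalAtTarget.of_openCover Y.affineCover
    intro i
    haveI h : IsIntegralHom (Y.affineCover.pullbackHom f i) :=
      MorphismProperty.IsStableUnderBaseChange.of_isPullback (P := @IsIntegralHom)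
        (IsPullback.of_hasPullback _ _) ‹IsIntegralHom f›
    exact (aux_affine (Y.affineCover.pullbackHom f i)).1
  exact this

lemma aux_inj {X Y : Scheme} (f : X ⟶ Y) [IsIntegralHom f] {x x' : X} (h : x ⤳ x')
    (he : f.base x = f.base x') : x = x' := by
  obtain ⟨_, ⟨U, hU, rfl⟩, hxU, -⟩ := Y.isBasis_affineOpens.exists_subset_of_mem_open
    (Set.mem_univ (f.base x')) isOpen_univ
  have hx' : x' ∈ f ⁻¹ᵁ U := hxU
  have hx : x ∈ f ⁻¹ᵁ U := h.mem_open (f ⁻¹ᵁ U).isOpen hx'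
  haveI : IsAffine U := hU
  haveI : IsIntegralHom (f ∣_ U) := inferInstance
  have hres := (aux_affine (f ∣_ U)).2
  have hspecsub : (⟨x, hx⟩ : (f ⁻¹ᵁ U : Scheme)) ⤳ (⟨x', hx'⟩ : (f ⁻¹ᵁ U : Scheme)) :=
    (Topology.IsInducing.subtypeVal).specializes_iff.mp h
  have heq : (f ∣_ U).base ⟨x, hx⟩ = (f ∣_ U).base ⟨x', hx'⟩ := by
    simp only [morphismRestrict_base]
    exact Subtype.ext he
  have := hres hspecsub heq
  exact congrArg Subtype.val this

attribute [local instance 0] specializationOrder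

/-- An integral surjective morphism of schemes preserves the topological Krull dimension:
if `f : X ⟶ Y` is integral and surjective, then `dim X = dim Y`. -/
theorem stmt_1 {X Y : Scheme} (f : X ⟶ Y) [IsIntegralHom f]
    (hf : Function.Surjective f.base) :
    topologicalKrullDim X = topologicalKrullDim Y := by
  have hX : topologicalKrullDim X = Order.krullDim X :=
    Order.krullDim_eq_of_orderIso (irreducibleSetEquivPoints (α := X))
  have hY : topologicalKrullDim Y = Order.krullDim Y :=
    Order.krullDim_eq_of_orderIso (irreducibleSetEquivPoints (α := Y))
  rw [hX, hY]
  have h1 : Order.krullDim (X : Type _) ≤ Order.krullDim (Y : Type _) := by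
    apply Order.krullDim_le_of_strictMono f.base
    intro a b hab
    have hba : b ⤳ a := hab.le
    have hle : f.base a ≤ f.base b := hba.map f.base.hom.2
    refine lt_of_le_of_ne hle fun he => ?_
    exact hab.ne ((aux_inj f hba he.symm).symm)
  have h2 : Order.krullDim (Y : Type _) ≤ Order.krullDim (X : Type _) := by
    have hsp := aux_spec f
    have lift : ∀ n (p : LTSeries (Y : Type _)), p.length = n →
        ∃ q : LTSeries (X : Type _), q.length = n ∧ f.base q.head = p.head := by
      intro n
      induction n with
      | zero =>
        intro p hp
        obtain ⟨x, hxeq⟩ := hf p.head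
        exact ⟨RelSeries.singleton _ x, rfl, hxeq⟩
      | succ n ih =>
        intro p hp
        have hlen : p.length ≠ 0 := by omega
        obtain ⟨q, hqlen, hqhead⟩ := ih (p.tail hlen) (by simp [hp])
        rw [RelSeries.head_tail] at hqhead
        have h01 : (0 : Fin (p.length + 1)) < 1 := by
          rw [Fin.lt_iff_val_lt_val, Fin.val_one']
          simp only [hp, Fin.val_zero]
          simp [Nat.one_mod]
        have hlt : p.head < p 1 := p.strictMono h01
        have hspec : f.base q.head ⤳ p.head := by
          rw [hqhead]
          exact hlt.le
        obtain ⟨x₀, hq0, hx₀⟩ := hsp hspec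
        have hne : x₀ ≠ q.head := by
          intro h
          rw [h] at hx₀
          rw [hqhead] at hx₀
          exact hlt.ne hx₀.symm
        have hlt' : x₀ < q.head := lt_of_le_of_ne hq0 hne
        refine ⟨q.cons x₀ hlt', ?_, ?_⟩
        · change 0 + q.length + 1 = n + 1; omega
        · rw [RelSeries.head_cons]
          exact hx₀
    apply iSup_le
    intro p
    obtain ⟨q, hqlen, -⟩ := lift p.length p rfl
    rw [← hqlen]
    exact Order.LTSeries.length_le_krullDim q
  exact le_antisymm h1 h2
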